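/- Let f : ℕ → ℕ be a block function with infinitely many pairwise non-isomorphic block types, each occurring only finitely often, and let c_f : ℕ → ℕ be its counting function (c_f(n) = number of occurrences of the n-th type in the block decomposition of f). Then the set C⁻ = {(k,n) : k ≤ c_f(n)} is computably enumerable, the set C⁺ = {(k,n) : k ≥ c_f(n)} is co-computably-enumerable, and c_f ≡_T C⁻ ⊕ C⁺; consequently the Turing degree of c_f is a c.e. degree (it contains a c.e. set, namely C⁻ together with the Turing-equivalence witnessed). -/

import Mathlib

/-- Oracle computability: partial recursive in the total oracle `O`. -/
inductive RecursiveInOracle (O : ℕ → ℕ) : (ℕ →. ℕ) → Prop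
  | zero : RecursiveInOracle O fun _ => 0
  | succ : RecursiveInOracle O Nat.succ
  | left : RecursiveInOracle O fun n => (Nat.unpair n).1
  | right : RecursiveInOracle O fun n => (Nat.unpair n).2
  | oracle : RecursiveInOracle O O
  | pair {f g : ℕ →. ℕ} : RecursiveInOracle O f → RecursiveInOracle O g →
      RecursiveInOracle O fun n => Nat.pair <$> f n <*> g n
  | comp {f g : ℕ →. ℕ} : RecursiveInOracle O f → RecursiveInOracle O g →
      RecursiveInOracle O fun n => g n >>= f
  | prec {f g : ℕ →. ℕ} : RecursiveInOracle O f → RecursiveInOracle O g →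
      RecursiveInOracle O (Nat.unpaired fun a n =>
        n.rec (f a) fun y IH => do let i ← IH; g (Nat.pair a (Nat.pair y i)))
  | rfind {f : ℕ →. ℕ} : RecursiveInOracle O f →
      RecursiveInOracle O fun a =>
        Nat.rfind fun n => (fun m => m = 0) <$> f (Nat.pair a n)

/-- Turing reducibility between total functions on ℕ. -/
def TuringReducibleFn (f g : ℕ → ℕ) : Prop := RecursiveInOracle g f

/-- Turing equivalence between total functions on ℕ. -/
def TuringEquiv (f g : ℕ → ℕ) : Prop := TuringReducibleFn f g ∧ TuringReducibleFn g f

open Classical in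
/-- Characteristic function of a predicate on ℕ. -/
noncomputable def chi (p : ℕ → Prop) : ℕ → ℕ := fun n => if p n then 1 else 0

/-- Effective join `A ⊕ B` of two predicates on ℕ. -/
def joinPred (p q : ℕ → Prop) : ℕ → Prop :=
  fun n => if n % 2 = 0 then p (n / 2) else q (n / 2)

/-- A predicate on ℕ is computably enumerable. -/
def CEPred (p : ℕ → Prop) : Prop :=
  ∃ f : ℕ →. Unit, Partrec f ∧ ∀ n, p n ↔ (f n).Dom

/-- Blocks `i` and `j` of the block decomposition given by the boundary function `B`
(the `i`-th block is the interval `[B i; B (i+1))`) are isomorphic as structures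
`(I, <, f ↾ I)`: they have the same length and `f` acts the same way on them modulo
the order-isomorphism (shift). -/
def BlockIso (f : ℕ → ℕ) (B : ℕ → ℕ) (i j : ℕ) : Prop :=
  B (i + 1) - B i = B (j + 1) - B j ∧
    ∀ x, B i + x < B (i + 1) → f (B i + x) - B i = f (B j + x) - B j

/-! ### Auxiliary lemmas -/

namespace RecursiveInOracle

theorem of_eq' {O : ℕ → ℕ} {f g : ℕ →. ℕ} (hf : RecursiveInOracle O f) (h : ∀ n, f n = g n) :
    RecursiveInOracle O g := (funext h : f = g) ▸ hf

theorem of_partrec {O : ℕ → ℕ} {f : ℕ →. ℕ} (hf : Nat.Partrec f) : RecursiveInOracle O f := by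
  induction hf with
  | zero => exact .zero
  | succ => exact .succ
  | left => exact .left
  | right => exact .right
  | pair _ _ ih1 ih2 => exact .pair ih1 ih2
  | comp _ _ ih1 ih2 => exact .comp ih1 ih2
  | prec _ _ ih1 ih2 => exact .prec ih1 ih2
  | rfind _ ih => exact .rfind ih

theorem of_computable {O f : ℕ → ℕ} (hf : Computable f) : RecursiveInOracle O f :=
  of_partrec (Partrec.nat_iff.1 hf.partrec)

theorem totalComp {O f g : ℕ → ℕ} (hf : RecursiveInOracle O f) (hg : RecursiveInOracle O g) :
    RecursiveInOracle O (fun n => f (g n) : ℕ → ℕ) :=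
  (RecursiveInOracle.comp hf hg).of_eq' fun n => by exact Part.bind_some _ _

theorem totalPair {O f g : ℕ → ℕ} (hf : RecursiveInOracle O f) (hg : RecursiveInOracle O g) :
    RecursiveInOracle O (fun n => Nat.pair (f n) (g n) : ℕ → ℕ) :=
  (RecursiveInOracle.pair hf hg).of_eq' fun n => by simp [PFun.coe_val, Seq.seq]

/-- Computing `F (n, O (G n))` from the oracle `O`. -/
theorem totalUse {O F G : ℕ → ℕ} (hF : Computable F) (hG : Computable G) :
    RecursiveInOracle O (fun n => F (Nat.pair n (O (G n))) : ℕ → ℕ) :=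
  totalComp (of_computable hF)
    (totalPair (of_computable Computable.id) (totalComp .oracle (of_computable hG)))

theorem rfind_total {O : ℕ → ℕ} {e : ℕ → ℕ} (he : RecursiveInOracle O e) {c : ℕ → ℕ}
    (h : ∀ n k, e (Nat.pair n k) = 0 ↔ c n ≤ k) : RecursiveInOracle O c := by
  refine he.rfind.of_eq' fun n => ?_
  show _ = Part.some (c n)
  apply Part.eq_some_iff.2
  apply Nat.mem_rfind.2
  constructor
  · simp [PFun.coe_val, (h n (c n)).2 le_rfl]
  · intro m hm
    have : ¬ e (Nat.pair n m) = 0 := fun hh => absurd ((h n m).1 hh) (by omega)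
    simp [PFun.coe_val, this]

end RecursiveInOracle

theorem CEPred.congr {p q : ℕ → Prop} (hp : CEPred p) (h : ∀ n, p n ↔ q n) : CEPred q := by
  obtain ⟨f, hf, hd⟩ := hp
  exact ⟨f, hf, fun n => (h n).symm.trans (hd n)⟩

theorem cePred_exists {g : ℕ → ℕ → Bool} (hg : Computable₂ g) :
    CEPred (fun n => ∃ s, g n s = true) := by
  refine ⟨fun n => (Nat.rfind (fun s => Part.some (g n s))).map (fun _ => ()), ?_, fun n => ?_⟩
  · exact (Partrec.rfind hg.partrec₂).map ((Computable.const ()).comp Computable.fst).to₂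
  · simp only [Part.map_Dom]
    refine Iff.trans ?_ Nat.rfind_dom.symm
    constructor
    · rintro ⟨s, hs⟩
      exact ⟨s, by simp [hs], fun {m} _ => trivial⟩
    · rintro ⟨s, hs, -⟩
      exact ⟨s, by simpa using hs⟩

theorem cePred_join {p q : ℕ → Prop} (hp : CEPred p) (hq : CEPred q) :
    CEPred (joinPred p q) := by
  obtain ⟨f, hf, hfd⟩ := hp
  obtain ⟨g, hg, hgd⟩ := hq
  have hdiv : Computable fun n : ℕ => n / 2 :=
    (Primrec.nat_div.comp Primrec.id (Primrec.const 2)).to_comp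
  refine ⟨fun n => bif n % 2 == 0 then f (n / 2) else g (n / 2), ?_, fun n => ?_⟩
  · exact Partrec.cond
      ((Primrec.beq.comp (Primrec.nat_mod.comp Primrec.id (Primrec.const 2))
        (Primrec.const 0)).to_comp)
      (hf.comp hdiv) (hg.comp hdiv)
  · by_cases h : n % 2 = 0
    · simp only [joinPred, if_pos h, h]
      simpa using hfd (n / 2)
    · simp only [joinPred, if_neg h]
      have : (n % 2 == 0) = false := by simpa using h
      simp only [this, Bool.cond_false]
      exact hgd (n / 2)

def countB (t : ℕ → ℕ) : ℕ → ℕ → ℕ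
  | 0, _ => 0
  | s+1, n => countB t s n + (if t s = n then 1 else 0)

theorem countB_eq (t : ℕ → ℕ) (s n : ℕ) :
    countB t s n = ((Finset.range s).filter (fun i => t i = n)).card := by
  induction s with
  | zero => simp [countB]
  | succ s ih =>
    rw [Finset.range_add_one, Finset.filter_insert]
    by_cases h : t s = n
    · rw [if_pos h, Finset.card_insert_of_notMem (by simp), ← ih]
      simp [countB, h]
    · rw [if_neg h, ← ih]; simp [countB, h]

theorem le_cf_iff {t : ℕ → ℕ} (hfin : ∀ n, {i | t i = n}.Finite) {cf : ℕ → ℕ}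
    (hcf : ∀ n, cf n = {i | t i = n}.ncard) (k n : ℕ) :
    k ≤ cf n ↔ ∃ s, k ≤ countB t s n := by
  have hcard : cf n = (hfin n).toFinset.card := by
    rw [hcf]; exact Set.ncard_eq_toFinset_card _ (hfin n)
  constructor
  · intro hk
    obtain ⟨s, hs⟩ := (hfin n).toFinset.exists_nat_subset_range
    refine ⟨s, ?_⟩
    rw [countB_eq]
    have he : (hfin n).toFinset = (Finset.range s).filter (fun i => t i = n) := by
      ext i
      simp only [Set.Finite.mem_toFinset, Set.mem_setOf_eq, Finset.mem_filter, Finset.mem_range]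
      exact ⟨fun h => ⟨Finset.mem_range.1 (hs ((hfin n).mem_toFinset.2 h)), h⟩, fun h => h.2⟩
    rw [← he, ← hcard]; exact hk
  · rintro ⟨s, hs⟩
    refine hs.trans ?_
    rw [countB_eq, hcard]
    apply Finset.card_le_card
    intro i hi
    simp only [Finset.mem_filter] at hi
    simp [Set.Finite.mem_toFinset, hi.2]

theorem countB_computable {t : ℕ → ℕ} (ht : Computable t) : Computable₂ (countB t) := by
  have hc : Computable (fun x : (ℕ × ℕ) × (ℕ × ℕ) => t x.2.1 == x.1.2) :=
    Primrec.beq.to_comp.comp (ht.comp (Computable.fst.comp Computable.snd))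
      (Computable.snd.comp Computable.fst)
  have hh : Computable₂ (fun (p : ℕ × ℕ) (q : ℕ × ℕ) => q.2 + if t q.1 = p.2 then 1 else 0) := by
    have := Computable.cond hc
      (Computable.succ.comp (Computable.snd.comp Computable.snd))
      (Computable.snd.comp Computable.snd)
    refine this.of_eq fun x => ?_
    by_cases h : t x.2.1 = x.1.2 <;> simp [Bool.cond_eq_ite, beq_iff_eq, h]
  have hrec : Computable (fun p : ℕ × ℕ =>
      p.1.rec 0 (fun y IH => IH + if t y = p.2 then 1 else 0) : ℕ × ℕ → ℕ) :=
    Computable.nat_rec Computable.fst (Computable.const 0) hh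
  have aux : ∀ s n, (Nat.rec 0 (fun y IH => IH + if t y = n then 1 else 0) s : ℕ) = countB t s n := by
    intro s n
    induction s with
    | zero => rfl
    | succ s ih => simp only [countB, ← ih]
  exact hrec.to₂.of_eq fun p => aux p.1 p.2

/-- If `f` is a computable block function whose block decomposition (given by the
computable boundary function `B`) has infinitely many pairwise non-isomorphic types,
each occurring only finitely often, enumerated one-to-one by a computable type function
`t`, and `c_f` is the counting function of the types, then
`C⁻ = {(k,n) : k ≤ c_f n}` is c.e., `C⁺ = {(k,n) : k ≥ c_f n}` is co-c.e.,
`c_f ≡_T C⁻ ⊕ C⁺`, and the Turing degree of `c_f` is a c.e. degree. -/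
theorem counting_function_ce_degree (f : ℕ → ℕ) (hf : Computable f)
    (B : ℕ → ℕ) (hB : Computable B) (hB0 : B 0 = 0) (hBmono : StrictMono B)
    (hclosed : ∀ i, (∀ x, B i ≤ x → x < B (i + 1) → B i ≤ f x ∧ f x < B (i + 1)) ∧
      (∀ x y, B i ≤ x → x < B (i + 1) → f y = x → B i ≤ y ∧ y < B (i + 1)))
    (t : ℕ → ℕ) (ht : Computable t) (htsurj : Function.Surjective t)
    (htiso : ∀ i j, t i = t j ↔ BlockIso f B i j)
    (hfin : ∀ n : ℕ, {i : ℕ | t i = n}.Finite)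
    (cf : ℕ → ℕ) (hcf : ∀ n : ℕ, cf n = {i : ℕ | t i = n}.ncard) :
    CEPred (fun p : ℕ => p.unpair.1 ≤ cf p.unpair.2) ∧
    CEPred (fun p : ℕ => ¬ cf p.unpair.2 ≤ p.unpair.1) ∧
    TuringEquiv cf (chi (joinPred (fun p => p.unpair.1 ≤ cf p.unpair.2)
      (fun p => cf p.unpair.2 ≤ p.unpair.1))) ∧
    ∃ W : ℕ → Prop, CEPred W ∧ TuringEquiv cf (chi W) := by
  have hle := le_cf_iff hfin hcf
  -- primrec building blocks
  have pu1 : Primrec fun x : ℕ => x.unpair.1 := Primrec.fst.comp Primrec.unpair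
  have pu2 : Primrec fun x : ℕ => x.unpair.2 := Primrec.snd.comp Primrec.unpair
  have pdiv2 : Primrec fun x : ℕ => x / 2 := Primrec.nat_div.comp Primrec.id (Primrec.const 2)
  have hG1 : Computable fun n : ℕ => (n / 2).unpair.2 := (pu2.comp pdiv2).to_comp
  have hparity : PrimrecPred fun x : ℕ => x.unpair.1 % 2 = 0 :=
    Primrec.eq.comp (Primrec.nat_mod.comp pu1 (Primrec.const 2)) (Primrec.const 0)
  have hG2 : Computable fun x : ℕ => 2 * Nat.pair x.unpair.2 x.unpair.1 + 1 :=
    (Primrec.succ.comp (Primrec.nat_mul.comp (Primrec.const 2)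
      (Primrec₂.natPair.comp pu2 pu1))).to_comp
  -- C⁻ is c.e.
  have hCm : CEPred (fun p : ℕ => p.unpair.1 ≤ cf p.unpair.2) := by
    have hg : Computable₂ fun p s : ℕ => decide (p.unpair.1 ≤ countB t s p.unpair.2) := by
      have h1 : Computable fun x : ℕ × ℕ => x.1.unpair.1 := (pu1.comp Primrec.fst).to_comp
      have h2 : Computable fun x : ℕ × ℕ => countB t x.2 x.1.unpair.2 :=
        (countB_computable ht).comp Computable.snd ((pu2.comp Primrec.fst).to_comp)
      exact Primrec.nat_le.decide.to_comp.comp h1 h2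
    refine (cePred_exists hg).congr fun p => ?_
    simp only [decide_eq_true_eq]
    exact (hle p.unpair.1 p.unpair.2).symm
  -- complement of C⁺ is c.e.
  have hCp : CEPred (fun p : ℕ => ¬ cf p.unpair.2 ≤ p.unpair.1) := by
    have hg : Computable₂ fun p s : ℕ => decide (p.unpair.1 + 1 ≤ countB t s p.unpair.2) := by
      have h1 : Computable fun x : ℕ × ℕ => x.1.unpair.1 + 1 :=
        (Primrec.succ.comp (pu1.comp Primrec.fst)).to_comp
      have h2 : Computable fun x : ℕ × ℕ => countB t x.2 x.1.unpair.2 :=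
        (countB_computable ht).comp Computable.snd ((pu2.comp Primrec.fst).to_comp)
      exact Primrec.nat_le.decide.to_comp.comp h1 h2
    refine (cePred_exists hg).congr fun p => ?_
    simp only [decide_eq_true_eq]
    rw [← hle]
    omega
  -- chi (C⁻ ⊕ C⁺) is reducible to cf
  have hredJoin : TuringReducibleFn (chi (joinPred (fun p => p.unpair.1 ≤ cf p.unpair.2)
      (fun p => cf p.unpair.2 ≤ p.unpair.1))) cf := by
    have hF1 : Computable fun x : ℕ =>
        if x.unpair.1 % 2 = 0 then (if (x.unpair.1 / 2).unpair.1 ≤ x.unpair.2 then 1 else 0)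
        else (if x.unpair.2 ≤ (x.unpair.1 / 2).unpair.1 then 1 else 0) := by
      apply Primrec.to_comp
      exact Primrec.ite hparity
        (Primrec.ite (Primrec.nat_le.comp (pu1.comp (pdiv2.comp pu1)) pu2)
          (Primrec.const 1) (Primrec.const 0))
        (Primrec.ite (Primrec.nat_le.comp pu2 (pu1.comp (pdiv2.comp pu1)))
          (Primrec.const 1) (Primrec.const 0))
    refine (RecursiveInOracle.totalUse (O := cf) hF1 hG1).of_eq' fun n => congrArg Part.some ?_
    by_cases h : n % 2 = 0
    · by_cases h2 : (n / 2).unpair.1 ≤ cf ((n / 2).unpair.2) <;>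
        simp [chi, joinPred, Nat.unpair_pair, h, h2]
    · by_cases h2 : cf ((n / 2).unpair.2) ≤ (n / 2).unpair.1 <;>
        simp [chi, joinPred, Nat.unpair_pair, h, h2]
  -- cf is reducible to chi (C⁻ ⊕ C⁺)
  have hredcf : TuringReducibleFn cf (chi (joinPred (fun p => p.unpair.1 ≤ cf p.unpair.2)
      (fun p => cf p.unpair.2 ≤ p.unpair.1))) := by
    set O := chi (joinPred (fun p => p.unpair.1 ≤ cf p.unpair.2)
      (fun p => cf p.unpair.2 ≤ p.unpair.1)) with hO
    have he : RecursiveInOracle O (fun x => 1 - O (2 * Nat.pair x.unpair.2 x.unpair.1 + 1) : ℕ → ℕ) :=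
      RecursiveInOracle.totalComp
        (RecursiveInOracle.of_computable ((Primrec.nat_sub.comp (Primrec.const 1) Primrec.id).to_comp))
        (RecursiveInOracle.totalComp .oracle (RecursiveInOracle.of_computable hG2))
    apply RecursiveInOracle.rfind_total he
    intro n k
    have h1 : ¬ ((2 * Nat.pair k n + 1) % 2 = 0) := by omega
    have h2 : (2 * Nat.pair k n + 1) / 2 = Nat.pair k n := by omega
    by_cases h : cf n ≤ k <;>
      simp [hO, chi, joinPred, Nat.unpair_pair, h1, h2, h]
  -- the c.e. set W
  have hredW2 : TuringReducibleFn (chi (joinPred (fun p => p.unpair.1 ≤ cf p.unpair.2)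
      (fun p => ¬ cf p.unpair.2 ≤ p.unpair.1))) cf := by
    have hF1 : Computable fun x : ℕ =>
        if x.unpair.1 % 2 = 0 then (if (x.unpair.1 / 2).unpair.1 ≤ x.unpair.2 then 1 else 0)
        else (if x.unpair.2 ≤ (x.unpair.1 / 2).unpair.1 then 0 else 1) := by
      apply Primrec.to_comp
      exact Primrec.ite hparity
        (Primrec.ite (Primrec.nat_le.comp (pu1.comp (pdiv2.comp pu1)) pu2)
          (Primrec.const 1) (Primrec.const 0))
        (Primrec.ite (Primrec.nat_le.comp pu2 (pu1.comp (pdiv2.comp pu1)))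
          (Primrec.const 0) (Primrec.const 1))
    refine (RecursiveInOracle.totalUse (O := cf) hF1 hG1).of_eq' fun n => congrArg Part.some ?_
    by_cases h : n % 2 = 0
    · by_cases h2 : (n / 2).unpair.1 ≤ cf ((n / 2).unpair.2) <;>
        simp [chi, joinPred, Nat.unpair_pair, h, h2]
    · by_cases h2 : cf ((n / 2).unpair.2) ≤ (n / 2).unpair.1 <;>
        simp [chi, joinPred, Nat.unpair_pair, h, h2]
  have hredW1 : TuringReducibleFn cf (chi (joinPred (fun p => p.unpair.1 ≤ cf p.unpair.2)
      (fun p => ¬ cf p.unpair.2 ≤ p.unpair.1))) := by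
    set O := chi (joinPred (fun p => p.unpair.1 ≤ cf p.unpair.2)
      (fun p => ¬ cf p.unpair.2 ≤ p.unpair.1)) with hO
    have he : RecursiveInOracle O (fun x => O (2 * Nat.pair x.unpair.2 x.unpair.1 + 1) : ℕ → ℕ) :=
      RecursiveInOracle.totalComp .oracle (RecursiveInOracle.of_computable hG2)
    apply RecursiveInOracle.rfind_total he
    intro n k
    have h1 : ¬ ((2 * Nat.pair k n + 1) % 2 = 0) := by omega
    have h2 : (2 * Nat.pair k n + 1) / 2 = Nat.pair k n := by omega
    by_cases h : cf n ≤ k <;>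
      simp [hO, chi, joinPred, Nat.unpair_pair, h1, h2, h]
  exact ⟨hCm, hCp, ⟨hredcf, hredJoin⟩,
    joinPred (fun p => p.unpair.1 ≤ cf p.unpair.2) (fun p => ¬ cf p.unpair.2 ≤ p.unpair.1),
    cePred_join hCm hCp, hredW1, hredW2⟩
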